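/- arXiv:1507.02351 — 5 statements merged into one kernel-verified Lean document; each statement's English description precedes it below -/
import Mathlib

section
/- Let f : 2^N → ℝ≥0 be a monotone submodular set function on a finite ground set N, let T ⊆ N, and define the marginal f_T(A) = f(T ∪ A) − f(T). Suppose O ⊆ N with |O| > 1/ε for some ε > 0, and let B ⊆ O be a set of at most ⌈1/ε⌉ elements of O chosen greedily to maximize marginal value (equivalently, any B ⊆ O with |B| = ⌈1/ε⌉ and f_T(B) ≥ (|B|/|O|)·f_T(O)). Then f_T(B)/(1+|B|) ≥ (1−ε)·f_T(O)/(1+|O|). -/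
/-- density of a greedily chosen small block approximates the density
of the full block, for monotone submodular `f`. -/
theorem stmt_0 {N : Type*} [DecidableEq N] [Fintype N]
    (f : Finset N → ℝ)
    (hnn : ∀ S, 0 ≤ f S)
    (hmono : ∀ S T : Finset N, S ⊆ T → f S ≤ f T)
    (hsub : ∀ S T : Finset N, f (S ∪ T) + f (S ∩ T) ≤ f S + f T)
    (T O B : Finset N) (ε : ℝ) (hε : 0 < ε)
    (hO : (1 : ℝ) / ε < O.card)
    (hBO : B ⊆ O) (hBcard : B.card = ⌈1 / ε⌉₊)
    (hBval : (B.card : ℝ) / O.card * (f (T ∪ O) - f T) ≤ f (T ∪ B) - f T) :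
    (1 - ε) * (f (T ∪ O) - f T) / (1 + O.card) ≤ (f (T ∪ B) - f T) / (1 + B.card) := by
  set o : ℝ := (O.card : ℝ) with ho
  set b : ℝ := (B.card : ℝ) with hb
  have hFO : 0 ≤ f (T ∪ O) - f T := by
    have := hmono T (T ∪ O) (Finset.subset_union_left)
    linarith
  have hFB : 0 ≤ f (T ∪ B) - f T := by
    have := hmono T (T ∪ B) (Finset.subset_union_left)
    linarith
  have hopos : 0 < o := lt_trans (by positivity) hO
  have hbge : 1 / ε ≤ b := by
    rw [hb, hBcard]; exact Nat.le_ceil _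
  have hεb : 1 ≤ ε * b := by
    rw [div_le_iff₀ hε] at hbge; linarith
  have hεo : 1 < ε * o := by
    rw [div_lt_iff₀ hε] at hO; linarith
  have hbnn : 0 ≤ b := Nat.cast_nonneg _
  rw [div_le_div_iff₀ (by linarith) (by linarith)]
  have hval : b * (f (T ∪ O) - f T) ≤ (f (T ∪ B) - f T) * o := by
    rw [div_mul_eq_mul_div, div_le_iff₀ hopos] at hBval
    linarith
  nlinarith [mul_nonneg (le_trans zero_le_one hεb) hFO, mul_nonneg (mul_nonneg hε.le hbnn) hFO]
end

section
/- Let f : 2^N → ℝ≥0 be a submodular set function, T ⊆ N, and O ⊆ N with |O| ≥ m ≥ 1. Then there exists a subset B ⊆ O with |B| = m such that f_T(B) ≥ (m/|O|)·f_T(O), where f_T(A) = f(T ∪ A) − f(T). -/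
private lemma dr_lemma {N : Type*} [DecidableEq N] (f : Finset N → ℝ)
    (hsub : ∀ S T : Finset N, f (S ∪ T) + f (S ∩ T) ≤ f S + f T)
    {A B : Finset N} {x : N} (hAB : A ⊆ B) (hx : x ∉ B) :
    f (insert x B) - f B ≤ f (insert x A) - f A := by
  have h := hsub (insert x A) B
  have h1 : insert x A ∪ B = insert x B := by
    rw [Finset.insert_union, Finset.union_eq_right.mpr hAB]
  have h2 : insert x A ∩ B = A := by
    rw [Finset.insert_inter_of_notMem hx, Finset.inter_eq_left.mpr hAB]
  rw [h1, h2] at h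
  linarith

private lemma tele_lemma {N : Type*} [DecidableEq N] (f : Finset N → ℝ)
    (hsub : ∀ S T : Finset N, f (S ∪ T) + f (S ∩ T) ≤ f S + f T)
    (S : Finset N) :
    ∀ (d : ℕ) (U T : Finset N), T ⊆ U → U ⊆ S → (U \ T).card = d →
      ∑ x ∈ U \ T, (f S - f (S.erase x)) ≤ f U - f T := by
  intro d
  induction d with
  | zero =>
    intro U T hTU hUS hcard
    have he : U \ T = ∅ := Finset.card_eq_zero.mp hcard
    have : U = T := Finset.Subset.antisymm
      (fun y hy => by
        by_contra hyT
        have : y ∈ U \ T := Finset.mem_sdiff.mpr ⟨hy, hyT⟩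
        simp [he] at this) hTU
    simp [he, this]
  | succ d ih =>
    intro U T hTU hUS hcard
    have hne : (U \ T).Nonempty := Finset.card_pos.mp (by omega)
    obtain ⟨x, hx⟩ := hne
    have hxU : x ∈ U := (Finset.mem_sdiff.mp hx).1
    have hxT : x ∉ T := (Finset.mem_sdiff.mp hx).2
    have hxS : x ∈ S := hUS hxU
    have hU' : T ⊆ U.erase x := fun y hy =>
      Finset.mem_erase.mpr ⟨fun h => hxT (h ▸ hy), hTU hy⟩
    have hU'S : U.erase x ⊆ S := (Finset.erase_subset x U).trans hUS
    have hset : (U.erase x) \ T = (U \ T).erase x := by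
      ext y; simp [Finset.mem_sdiff, Finset.mem_erase]; tauto
    have hcard' : ((U.erase x) \ T).card = d := by
      rw [hset, Finset.card_erase_of_mem hx]; omega
    have ihx := ih (U.erase x) T hU' hU'S hcard'
    have hsum : ∑ y ∈ U \ T, (f S - f (S.erase y))
        = (f S - f (S.erase x)) + ∑ y ∈ (U \ T).erase x, (f S - f (S.erase y)) :=
      (Finset.add_sum_erase _ _ hx).symm
    have hdr : f S - f (S.erase x) ≤ f U - f (U.erase x) := by
      have h := dr_lemma f hsub (Finset.erase_subset_erase x hUS)
        (Finset.notMem_erase x S)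
      rwa [Finset.insert_erase hxS, Finset.insert_erase hxU] at h
    rw [hsum, ← hset]
    linarith

private lemma main_aux {N : Type*} [DecidableEq N] (f : Finset N → ℝ)
    (hsub : ∀ S T : Finset N, f (S ∪ T) + f (S ∩ T) ≤ f S + f T)
    (T : Finset N) (m : ℕ) (hm : 1 ≤ m) :
    ∀ (d : ℕ) (O : Finset N), O.card = m + d →
      ∃ B ⊆ O, B.card = m ∧
        (m : ℝ) / O.card * (f (T ∪ O) - f T) ≤ f (T ∪ B) - f T := by
  intro d
  induction d with
  | zero =>
    intro O hO
    refine ⟨O, Finset.Subset.refl O, by omega, ?_⟩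
    have : (m : ℝ) / O.card = 1 := by
      have h : O.card = m := by omega
      rw [h, div_self (Nat.cast_ne_zero.mpr (by omega))]
    rw [this, one_mul]
  | succ d ih =>
    intro O hO
    set S := T ∪ O with hS
    set n : ℕ := m + d + 1 with hn
    have hOcard : O.card = n := by omega
    -- sum of marginal losses bounded by total
    have hsum : ∑ x ∈ O, (f S - f (T ∪ O.erase x)) ≤ f S - f T := by
      have key : ∑ x ∈ O, (f S - f (T ∪ O.erase x))
          = ∑ x ∈ S \ T, (f S - f (S.erase x)) := by
        have h1 : S \ T = O \ T := by
          ext y; simp [hS, Finset.mem_sdiff, Finset.mem_union]; tauto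
        rw [h1]
        rw [← Finset.sum_subset (Finset.sdiff_subset (s := O) (t := T))
          (fun x hxO hx => by
            have hxT : x ∈ T := by
              by_contra h
              exact hx (Finset.mem_sdiff.mpr ⟨hxO, h⟩)
            have : T ∪ O.erase x = S := by
              ext y
              simp only [hS, Finset.mem_union, Finset.mem_erase]
              constructor
              · tauto
              · rintro (h | h)
                · exact Or.inl h
                · by_cases hy : y = x
                  · exact Or.inl (hy ▸ hxT)
                  · exact Or.inr ⟨hy, h⟩
            rw [this]; ring)]
        apply Finset.sum_congr rfl
        intro x hx
        have hxT : x ∉ T := (Finset.mem_sdiff.mp hx).2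
        have : T ∪ O.erase x = S.erase x := by
          ext y
          simp only [hS, Finset.mem_union, Finset.mem_erase]
          constructor
          · rintro (h | ⟨h1, h2⟩)
            · exact ⟨fun he => hxT (he ▸ h), Or.inl h⟩
            · exact ⟨h1, Or.inr h2⟩
          · rintro ⟨h1, h2 | h2⟩
            · exact Or.inl h2
            · exact Or.inr ⟨h1, h2⟩
        rw [this]
      rw [key]
      exact tele_lemma f hsub S (S \ T).card S T Finset.subset_union_left
        (Finset.Subset.refl S) rfl
    have hOne : O.Nonempty := Finset.card_pos.mp (by omega)
    have havg : ∃ x ∈ O, f S - f (T ∪ O.erase x) ≤ (f S - f T) / n := by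
      apply Finset.exists_le_of_sum_le hOne
      rw [Finset.sum_const, hOcard]
      rw [nsmul_eq_mul, mul_div_cancel₀]
      · exact hsum
      · positivity
    obtain ⟨x, hxO, hxle⟩ := havg
    have hO' : (O.erase x).card = m + d := by
      rw [Finset.card_erase_of_mem hxO]; omega
    obtain ⟨B, hBsub, hBcard, hBle⟩ := ih (O.erase x) hO'
    refine ⟨B, hBsub.trans (Finset.erase_subset x O), hBcard, ?_⟩
    rw [hO'] at hBle
    rw [hOcard]
    have hnd : (0:ℝ) < (m + d : ℕ) := by positivity
    have hnn : (0:ℝ) < (n:ℕ) := by positivity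
    have h1 : ((m + d : ℕ) : ℝ) / n * (f S - f T) ≤ f (T ∪ O.erase x) - f T := by
      have : ((m + d : ℕ) : ℝ) / n = 1 - 1 / n := by
        field_simp
        push_cast [hn]
        ring
      rw [this]
      have := hxle
      have h2 : (f S - f T) / n = 1 / n * (f S - f T) := by ring
      nlinarith [hxle]
    have h3 : (m : ℝ) / n * (f S - f T)
        = (m : ℝ) / (m + d : ℕ) * (((m + d : ℕ) : ℝ) / n * (f S - f T)) := by
      field_simp
    rw [h3]
    calc (m : ℝ) / (m + d : ℕ) * (((m + d : ℕ) : ℝ) / n * (f S - f T))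
        ≤ (m : ℝ) / (m + d : ℕ) * (f (T ∪ O.erase x) - f T) := by
          apply mul_le_mul_of_nonneg_left h1; positivity
      _ ≤ f (T ∪ B) - f T := hBle

/-- averaging/truncation lemma: there is an `m`-subset of `O`
capturing an `m/|O|` fraction of the marginal value. -/
theorem stmt_1 {N : Type*} [DecidableEq N]
    (f : Finset N → ℝ)
    (hnn : ∀ S, 0 ≤ f S)
    (hsub : ∀ S T : Finset N, f (S ∪ T) + f (S ∩ T) ≤ f S + f T)
    (T O : Finset N) (m : ℕ) (hm : 1 ≤ m) (hmO : m ≤ O.card) :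
    ∃ B ⊆ O, B.card = m ∧
      (m : ℝ) / O.card * (f (T ∪ O) - f T) ≤ f (T ∪ B) - f T := by
  obtain ⟨d, hd⟩ : ∃ d, O.card = m + d := ⟨O.card - m, by omega⟩
  exact main_aux f hsub T m hm d O hd
end

section
/- Let g₁, g₂ : 2^N → [0,1] be monotone submodular set functions. Then g(S) := 1 − (1 − g₁(S))·(1 − g₂(S)) is also monotone submodular (with values in [0,1]). -/
/-- `1 - (1 - g₁)(1 - g₂)` of two monotone submodular `[0,1]`-valued
functions is monotone submodular with values in `[0,1]`. -/
theorem stmt_2 {N : Type*} [DecidableEq N]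
    (g₁ g₂ : Finset N → ℝ)
    (h₁range : ∀ S, g₁ S ∈ Set.Icc (0 : ℝ) 1)
    (h₂range : ∀ S, g₂ S ∈ Set.Icc (0 : ℝ) 1)
    (h₁mono : ∀ S T : Finset N, S ⊆ T → g₁ S ≤ g₁ T)
    (h₂mono : ∀ S T : Finset N, S ⊆ T → g₂ S ≤ g₂ T)
    (h₁sub : ∀ S T : Finset N, g₁ (S ∪ T) + g₁ (S ∩ T) ≤ g₁ S + g₁ T)
    (h₂sub : ∀ S T : Finset N, g₂ (S ∪ T) + g₂ (S ∩ T) ≤ g₂ S + g₂ T)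
    (g : Finset N → ℝ) (hg : ∀ S, g S = 1 - (1 - g₁ S) * (1 - g₂ S)) :
    (∀ S T : Finset N, S ⊆ T → g S ≤ g T) ∧
    (∀ S T : Finset N, g (S ∪ T) + g (S ∩ T) ≤ g S + g T) ∧
    (∀ S, g S ∈ Set.Icc (0 : ℝ) 1) := by
  refine ⟨?_, ?_, ?_⟩
  · intro S T hST
    rw [hg S, hg T]
    have h1 := h₁range S; have h2 := h₂range S
    have h1T := h₁range T; have h2T := h₂range T
    simp only [Set.mem_Icc] at *
    nlinarith [h₁mono S T hST, h₂mono S T hST,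
      mul_nonneg (by linarith [h1.2] : (0:ℝ) ≤ 1 - g₁ S) (by linarith [h₂mono S T hST, h2.1] : (0:ℝ) ≤ g₂ T - g₂ S),
      mul_nonneg (by linarith [h2T.2] : (0:ℝ) ≤ 1 - g₂ T) (by linarith [h₁mono S T hST] : (0:ℝ) ≤ g₁ T - g₁ S)]
  · intro S T
    rw [hg S, hg T, hg (S ∪ T), hg (S ∩ T)]
    have hiS : S ∩ T ⊆ S := Finset.inter_subset_left
    have hiT : S ∩ T ⊆ T := Finset.inter_subset_right
    have hSu : S ⊆ S ∪ T := Finset.subset_union_left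
    have hTu : T ⊆ S ∪ T := Finset.subset_union_right
    have r1i := h₁range (S ∩ T); have r2i := h₂range (S ∩ T)
    have r1u := h₁range (S ∪ T); have r2u := h₂range (S ∪ T)
    have r1S := h₁range S; have r2S := h₂range S
    have r1T := h₁range T; have r2T := h₂range T
    simp only [Set.mem_Icc] at *
    nlinarith [h₁sub S T, h₂sub S T,
      mul_nonneg (by linarith [r2i.2] : (0:ℝ) ≤ 1 - g₂ (S ∩ T)) (by linarith [h₁sub S T] : (0:ℝ) ≤ (g₁ S + g₁ T) - (g₁ (S ∪ T) + g₁ (S ∩ T))),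
      mul_nonneg (by linarith [r1u.2] : (0:ℝ) ≤ 1 - g₁ (S ∪ T)) (by linarith [h₂sub S T] : (0:ℝ) ≤ (g₂ S + g₂ T) - (g₂ (S ∪ T) + g₂ (S ∩ T))),
      mul_nonneg (by linarith [h₁mono S (S ∪ T) hSu] : (0:ℝ) ≤ g₁ (S ∪ T) - g₁ S) (by linarith [h₂mono (S ∩ T) S hiS] : (0:ℝ) ≤ g₂ S - g₂ (S ∩ T)),
      mul_nonneg (by linarith [h₁mono T (S ∪ T) hTu] : (0:ℝ) ≤ g₁ (S ∪ T) - g₁ T) (by linarith [h₂mono (S ∩ T) T hiT] : (0:ℝ) ≤ g₂ T - g₂ (S ∩ T))]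
  · intro S
    rw [hg S]
    have h1 := h₁range S; have h2 := h₂range S
    simp only [Set.mem_Icc] at *
    constructor
    · nlinarith [mul_nonneg (by linarith [h1.2] : (0:ℝ) ≤ 1 - g₁ S) (by linarith [h2.2] : (0:ℝ) ≤ 1 - g₂ S)]
    · nlinarith [mul_nonneg (by linarith [h1.2] : (0:ℝ) ≤ 1 - g₁ S) (by linarith [h2.2] : (0:ℝ) ≤ 1 - g₂ S)]
end

section
/- Let G = (V, E) be a finite graph and define f : 2^V → ℝ by f(T) = 1 if T contains both endpoints of some edge of G, and f(T) = 1 − 2^{−|T|} otherwise. Then f is monotone and submodular. -/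
open scoped Classical

private lemma pow_half_mono {m n : ℤ} (h : m ≤ n) :
    (2 : ℝ) ^ (-n) ≤ (2 : ℝ) ^ (-m) := by
  apply zpow_le_zpow_right₀ one_le_two
  omega

private lemma pow_half_split (n : ℕ) :
    (2 : ℝ) ^ (-(n : ℤ)) - (2 : ℝ) ^ (-((n : ℤ) + 1)) = (2 : ℝ) ^ (-((n : ℤ) + 1)) := by
  have h : (2 : ℝ) ^ (-((n : ℤ) + 1)) * 2 = (2 : ℝ) ^ (-(n : ℤ)) := by
    rw [← zpow_add_one₀ (by norm_num : (2:ℝ) ≠ 0)]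
    ring_nf
  linarith

/-- the function equal to `1` on sets containing an edge and
`1 - 2^{-|T|}` otherwise is monotone and submodular (diminishing returns). -/
theorem stmt_4 {V : Type*} [DecidableEq V] [Fintype V] (G : SimpleGraph V)
    (f : Finset V → ℝ)
    (hf : ∀ T : Finset V,
      f T = if ∃ u v, G.Adj u v ∧ u ∈ T ∧ v ∈ T then 1
            else 1 - (2 : ℝ) ^ (-(T.card : ℤ))) :
    (∀ S T : Finset V, S ⊆ T → f S ≤ f T) ∧
    (∀ S T : Finset V, S ⊆ T → ∀ a ∉ T,
      f (insert a T) - f T ≤ f (insert a S) - f S) := by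
  have hpos : ∀ n : ℤ, (0:ℝ) < (2:ℝ) ^ n := fun n => zpow_pos (by norm_num) n
  have hyes : ∀ T : Finset V, (∃ u v, G.Adj u v ∧ u ∈ T ∧ v ∈ T) → f T = 1 := by
    intro T h; rw [hf T, if_pos h]
  have hno : ∀ T : Finset V, (¬ ∃ u v, G.Adj u v ∧ u ∈ T ∧ v ∈ T) →
      f T = 1 - (2:ℝ) ^ (-(T.card : ℤ)) := by
    intro T h; rw [hf T, if_neg h]
  have hle : ∀ T : Finset V, f T ≤ 1 := by
    intro T
    by_cases h : ∃ u v, G.Adj u v ∧ u ∈ T ∧ v ∈ T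
    · rw [hyes T h]
    · rw [hno T h]; have := hpos (-(T.card : ℤ)); linarith
  have hge : ∀ T : Finset V, 1 - (2:ℝ) ^ (-(T.card : ℤ)) ≤ f T := by
    intro T
    by_cases h : ∃ u v, G.Adj u v ∧ u ∈ T ∧ v ∈ T
    · rw [hyes T h]; have := hpos (-(T.card : ℤ)); linarith
    · rw [hno T h]
  have mono : ∀ S T : Finset V, S ⊆ T → f S ≤ f T := by
    intro S T hST
    by_cases h : ∃ u v, G.Adj u v ∧ u ∈ S ∧ v ∈ S
    · obtain ⟨u, v, ha, hu, hv⟩ := h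
      rw [hyes S ⟨u, v, ha, hu, hv⟩, hyes T ⟨u, v, ha, hST hu, hST hv⟩]
    · rw [hno S h]
      refine le_trans ?_ (hge T)
      have := pow_half_mono (by exact_mod_cast Finset.card_le_card hST : (S.card:ℤ) ≤ T.card)
      linarith
  refine ⟨mono, ?_⟩
  intro S T hST a haT
  have haS : a ∉ S := fun h => haT (hST h)
  have hcS : (insert a S).card = S.card + 1 := Finset.card_insert_of_notMem haS
  have hcT : (insert a T).card = T.card + 1 := Finset.card_insert_of_notMem haT
  by_cases hT : ∃ u v, G.Adj u v ∧ u ∈ T ∧ v ∈ T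
  · -- T has an edge: LHS = 0
    obtain ⟨u, v, ha, hu, hv⟩ := hT
    rw [hyes T ⟨u, v, ha, hu, hv⟩,
      hyes (insert a T) ⟨u, v, ha, Finset.mem_insert_of_mem hu, Finset.mem_insert_of_mem hv⟩]
    have := mono S (insert a S) (Finset.subset_insert a S)
    linarith
  · have hS : ¬ ∃ u v, G.Adj u v ∧ u ∈ S ∧ v ∈ S := by
      rintro ⟨u, v, ha, hu, hv⟩; exact hT ⟨u, v, ha, hST hu, hST hv⟩
    rw [hno T hT, hno S hS]
    by_cases hiS : ∃ u v, G.Adj u v ∧ u ∈ insert a S ∧ v ∈ insert a S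
    · -- insert a S has an edge, hence insert a T does too
      obtain ⟨u, v, ha, hu, hv⟩ := hiS
      have hiT : ∃ u v, G.Adj u v ∧ u ∈ insert a T ∧ v ∈ insert a T :=
        ⟨u, v, ha, Finset.insert_subset_insert a hST hu, Finset.insert_subset_insert a hST hv⟩
      rw [hyes _ hiT, hyes _ ⟨u, v, ha, hu, hv⟩]
      have := pow_half_mono (by exact_mod_cast Finset.card_le_card hST : (S.card:ℤ) ≤ T.card)
      linarith
    · rw [hno _ hiS, hcS]
      push_cast
      have hsplitS := pow_half_split S.card
      by_cases hiT : ∃ u v, G.Adj u v ∧ u ∈ insert a T ∧ v ∈ insert a T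
      · -- insert a T has an edge but insert a S does not, so S ⊊ T
        have hne : S ≠ T := by rintro rfl; exact hiS hiT
        have hlt : S.card < T.card :=
          Finset.card_lt_card (lt_of_le_of_ne hST hne)
        rw [hyes _ hiT]
        have := pow_half_mono (by exact_mod_cast hlt : (S.card:ℤ) + 1 ≤ T.card)
        linarith
      · rw [hno _ hiT, hcT]
        push_cast
        have hsplitT := pow_half_split T.card
        have := pow_half_mono
          (by have := Finset.card_le_card hST; omega : (S.card:ℤ) + 1 ≤ (T.card:ℤ) + 1)
        linarith
end

section
/- Let f : 2^N → ℝ≥0 be a monotone submodular function on a finite ground set N = {1,…,n}, and let q ∈ [0,1]^n with max_i q_i ≤ δ. Let μ be the product distribution where element i is included independently with probability q_i, and ν the product distribution where element i is included independently with probability 1 − e^{−q_i}. Then E_{T∼ν}[f(T)] ≥ ((1 − e^{−δ})/δ) · E_{T∼μ}[f(T)]. -/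
lemma stmt_10_aux (n : ℕ) (f : Finset (Fin n) → ℝ)
    (hmono : ∀ S T : Finset (Fin n), S ⊆ T → f S ≤ f T)
    (hsub : ∀ S T : Finset (Fin n), f (S ∪ T) + f (S ∩ T) ≤ f S + f T)
    (c : ℝ) (hc0 : 0 ≤ c) (hc1 : c ≤ 1)
    (p q : Fin n → ℝ) (hp0 : ∀ i, 0 ≤ p i) (hpq : ∀ i, p i ≤ q i)
    (hcq : ∀ i, c * q i ≤ p i) (hq1 : ∀ i, q i ≤ 1) :
    ∀ (s A : Finset (Fin n)), Disjoint A s →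
      c * (∑ T ∈ s.powerset, (∏ i ∈ T, q i) * (∏ i ∈ s \ T, (1 - q i)) * f (A ∪ T))
          + (1 - c) * f A
        ≤ ∑ T ∈ s.powerset, (∏ i ∈ T, p i) * (∏ i ∈ s \ T, (1 - p i)) * f (A ∪ T) := by
  intro s
  induction s using Finset.cons_induction with
  | empty =>
      intro A _
      simp only [Finset.powerset_empty, Finset.sum_singleton, Finset.prod_empty,
        Finset.sdiff_empty, Finset.union_empty]
      ring_nf
      simp
  | cons a s ha ih =>
      intro A hA
      rw [Finset.cons_eq_insert] at hA ⊢
      have haA : a ∉ A := fun h => (Finset.disjoint_left.mp hA h) (Finset.mem_insert_self a s)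
      have hAs : Disjoint A s :=
        hA.mono_right (Finset.subset_insert a s)
      have hA2 : Disjoint (insert a A) s := by
        rw [Finset.insert_eq, Finset.disjoint_union_left]
        exact ⟨Finset.disjoint_singleton_left.mpr ha, hAs⟩
      -- rewrite both sums over the powerset of `insert a s`
      have key : ∀ (r : Fin n → ℝ),
          (∑ T ∈ (insert a s).powerset,
              (∏ i ∈ T, r i) * (∏ i ∈ insert a s \ T, (1 - r i)) * f (A ∪ T))
          = (1 - r a) *
              (∑ T ∈ s.powerset, (∏ i ∈ T, r i) * (∏ i ∈ s \ T, (1 - r i)) * f (A ∪ T))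
            + r a *
              (∑ T ∈ s.powerset,
                (∏ i ∈ T, r i) * (∏ i ∈ s \ T, (1 - r i)) * f (insert a A ∪ T)) := by
        intro r
        rw [Finset.sum_powerset_insert ha, Finset.mul_sum, Finset.mul_sum]
        congr 1
        · refine Finset.sum_congr rfl fun T hT => ?_
          have haT : a ∉ T := fun h => ha (Finset.mem_powerset.mp hT h)
          have hds : insert a s \ T = insert a (s \ T) :=
            Finset.insert_sdiff_of_notMem s haT
          have haST : a ∉ s \ T := fun h => ha (Finset.mem_sdiff.mp h).1
          rw [hds, Finset.prod_insert haST]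
          ring
        · refine Finset.sum_congr rfl fun T hT => ?_
          have hTs : T ⊆ s := Finset.mem_powerset.mp hT
          have haT : a ∉ T := fun h => ha (hTs h)
          have hds : insert a s \ insert a T = s \ T := by
            ext x
            simp only [Finset.mem_sdiff, Finset.mem_insert, not_or]
            constructor
            · rintro ⟨hx1 | hx1, hx2, hx3⟩
              · exact absurd hx1 hx2
              · exact ⟨hx1, hx3⟩
            · rintro ⟨hx1, hx2⟩
              exact ⟨Or.inr hx1, fun h => ha (h ▸ hx1), hx2⟩
          have hu : A ∪ insert a T = insert a A ∪ T := by
            rw [Finset.union_insert, Finset.insert_union]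
          rw [hds, Finset.prod_insert haT, hu]
          ring
      rw [key p, key q]
      -- abbreviations
      set S0p := ∑ T ∈ s.powerset, (∏ i ∈ T, p i) * (∏ i ∈ s \ T, (1 - p i)) * f (A ∪ T) with hS0p
      set S1p := ∑ T ∈ s.powerset,
        (∏ i ∈ T, p i) * (∏ i ∈ s \ T, (1 - p i)) * f (insert a A ∪ T) with hS1p
      set S0q := ∑ T ∈ s.powerset, (∏ i ∈ T, q i) * (∏ i ∈ s \ T, (1 - q i)) * f (A ∪ T) with hS0q
      set S1q := ∑ T ∈ s.powerset,
        (∏ i ∈ T, q i) * (∏ i ∈ s \ T, (1 - q i)) * f (insert a A ∪ T) with hS1q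
      have IH0 : c * S0q + (1 - c) * f A ≤ S0p := ih A hAs
      have IH1 : c * S1q + (1 - c) * f (insert a A) ≤ S1p := ih (insert a A) hA2
      -- weights are nonneg
      have hwp : ∀ T ∈ s.powerset, 0 ≤ (∏ i ∈ T, p i) * (∏ i ∈ s \ T, (1 - p i)) := by
        intro T _
        apply mul_nonneg
        · exact Finset.prod_nonneg fun i _ => hp0 i
        · exact Finset.prod_nonneg fun i _ => by
            have := hpq i; have := hq1 i; linarith
      have hwq : ∀ T ∈ s.powerset, 0 ≤ (∏ i ∈ T, q i) * (∏ i ∈ s \ T, (1 - q i)) := by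
        intro T _
        apply mul_nonneg
        · exact Finset.prod_nonneg fun i _ => le_trans (hp0 i) (hpq i)
        · exact Finset.prod_nonneg fun i _ => by have := hq1 i; linarith
      -- monotonicity: S0p ≤ S1p
      have h3 : S0p ≤ S1p := by
        apply Finset.sum_le_sum
        intro T hT
        have : A ∪ T ⊆ insert a A ∪ T :=
          Finset.union_subset_union (Finset.subset_insert a A) (le_refl T)
        exact mul_le_mul_of_nonneg_left (hmono _ _ this) (hwp T hT)
      -- submodularity: S1q ≤ S0q + (f (insert a A) - f A)
      have hsum1 : (∑ T ∈ s.powerset, (∏ i ∈ T, q i) * (∏ i ∈ s \ T, (1 - q i))) = 1 := by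
        rw [← Finset.prod_add]
        simp
      have h4 : S1q ≤ S0q + (f (insert a A) - f A) := by
        have step : ∀ T ∈ s.powerset,
            (∏ i ∈ T, q i) * (∏ i ∈ s \ T, (1 - q i)) * f (insert a A ∪ T)
            ≤ (∏ i ∈ T, q i) * (∏ i ∈ s \ T, (1 - q i)) * f (A ∪ T)
              + (∏ i ∈ T, q i) * (∏ i ∈ s \ T, (1 - q i)) * (f (insert a A) - f A) := by
          intro T hT
          have hTs : T ⊆ s := Finset.mem_powerset.mp hT
          have haT : a ∉ T := fun h => ha (hTs h)
          have hu : insert a A ∪ (A ∪ T) = insert a A ∪ T := by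
            ext x
            simp only [Finset.mem_union, Finset.mem_insert]
            tauto
          have hi : insert a A ∩ (A ∪ T) = A := by
            ext x
            simp only [Finset.mem_inter, Finset.mem_insert, Finset.mem_union]
            constructor
            · rintro ⟨hx1 | hx1, hx2 | hx2⟩
              · exact absurd (hx1 ▸ hx2) haA
              · exact absurd (hx1 ▸ hx2) haT
              · exact hx1
              · exact hx1
            · intro hx; exact ⟨Or.inr hx, Or.inl hx⟩
          have hsm := hsub (insert a A) (A ∪ T)
          rw [hu, hi] at hsm
          have hfs : f (insert a A ∪ T) ≤ f (A ∪ T) + (f (insert a A) - f A) := by linarith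
          nlinarith [hwq T hT, mul_le_mul_of_nonneg_left hfs (hwq T hT)]
        calc S1q ≤ ∑ T ∈ s.powerset,
              ((∏ i ∈ T, q i) * (∏ i ∈ s \ T, (1 - q i)) * f (A ∪ T)
              + (∏ i ∈ T, q i) * (∏ i ∈ s \ T, (1 - q i)) * (f (insert a A) - f A)) :=
            Finset.sum_le_sum step
          _ = S0q + (∑ T ∈ s.powerset, (∏ i ∈ T, q i) * (∏ i ∈ s \ T, (1 - q i)))
                * (f (insert a A) - f A) := by
            rw [Finset.sum_add_distrib, Finset.sum_mul]
          _ = S0q + (f (insert a A) - f A) := by rw [hsum1, one_mul]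
      -- final arithmetic
      have hQ0 : 0 ≤ q a := le_trans (hp0 a) (hpq a)
      have hQ1 : q a ≤ 1 := hq1 a
      have hP : c * q a ≤ p a := hcq a
      have t1 : 0 ≤ (p a - c * q a) * (S1p - S0p) :=
        mul_nonneg (by linarith) (by linarith)
      have t2 : 0 ≤ (1 - c * q a) * (S0p - (c * S0q + (1 - c) * f A)) := by
        apply mul_nonneg
        · nlinarith
        · linarith
      have t3 : 0 ≤ (c * q a) * (S1p - (c * S1q + (1 - c) * f (insert a A))) :=
        mul_nonneg (mul_nonneg hc0 hQ0) (by linarith)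
      have t4 : 0 ≤ (c * q a * (1 - c)) *
          ((f (insert a A) - f A) - (S1q - S0q)) :=
        mul_nonneg (mul_nonneg (mul_nonneg hc0 hQ0) (by linarith)) (by linarith)
      nlinarith [t1, t2, t3, t4]

/-- Poisson rounding loses at most a factor `(1 - e^{-δ})/δ`
for monotone submodular `f` when all probabilities are at most `δ`. -/
theorem stmt_10 (n : ℕ) (f : Finset (Fin n) → ℝ)
    (hnn : ∀ S, 0 ≤ f S)
    (hmono : ∀ S T : Finset (Fin n), S ⊆ T → f S ≤ f T)
    (hsub : ∀ S T : Finset (Fin n), f (S ∪ T) + f (S ∩ T) ≤ f S + f T)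
    (q : Fin n → ℝ) (δ : ℝ) (hδ : 0 < δ)
    (hq0 : ∀ i, 0 ≤ q i) (hq1 : ∀ i, q i ≤ 1) (hqδ : ∀ i, q i ≤ δ) :
    ((1 - Real.exp (-δ)) / δ) *
        ∑ T : Finset (Fin n), (∏ i ∈ T, q i) * (∏ i ∈ Tᶜ, (1 - q i)) * f T
      ≤ ∑ T : Finset (Fin n),
          (∏ i ∈ T, (1 - Real.exp (-(q i)))) * (∏ i ∈ Tᶜ, Real.exp (-(q i))) * f T := by
  set c : ℝ := (1 - Real.exp (-δ)) / δ with hc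
  set p : Fin n → ℝ := fun i => 1 - Real.exp (-(q i)) with hp
  have hexpδ : Real.exp (-δ) ≤ 1 := Real.exp_le_one_iff.mpr (by linarith)
  have hc0 : 0 ≤ c := div_nonneg (by linarith) hδ.le
  have hc1 : c ≤ 1 := by
    rw [hc, div_le_one hδ]
    have := Real.add_one_le_exp (-δ)
    linarith
  have hp0 : ∀ i, 0 ≤ p i := by
    intro i
    have : Real.exp (-(q i)) ≤ 1 := Real.exp_le_one_iff.mpr (by linarith [hq0 i])
    simp only [hp]; linarith
  have hpq : ∀ i, p i ≤ q i := by
    intro i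
    have := Real.add_one_le_exp (-(q i))
    simp only [hp]; linarith
  have hcq : ∀ i, c * q i ≤ p i := by
    intro i
    have ht0 : 0 ≤ q i / δ := div_nonneg (hq0 i) hδ.le
    have ht1 : q i / δ ≤ 1 := (div_le_one hδ).mpr (hqδ i)
    have hconv := convexOn_exp.2 (Set.mem_univ (0 : ℝ)) (Set.mem_univ (-δ))
      (by linarith : (0:ℝ) ≤ 1 - q i / δ) ht0 (by ring)
    simp only [smul_eq_mul, mul_zero, Real.exp_zero, mul_one, zero_add] at hconv
    have heq : (q i / δ) * (-δ) = -(q i) := by field_simp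
    rw [heq] at hconv
    have : c * q i = (q i / δ) * (1 - Real.exp (-δ)) := by rw [hc]; ring
    simp only [hp]
    nlinarith
  have main := stmt_10_aux n f hmono hsub c hc0 hc1 p q hp0 hpq hcq hq1
    Finset.univ ∅ (Finset.disjoint_empty_left _)
  simp only [Finset.empty_union] at main
  have hrw : ∀ (T : Finset (Fin n)), Tᶜ = Finset.univ \ T := fun T => by
    rw [Finset.compl_eq_univ_sdiff]
  have hLHS : (∑ T : Finset (Fin n), (∏ i ∈ T, q i) * (∏ i ∈ Tᶜ, (1 - q i)) * f T)
      = ∑ T ∈ Finset.univ.powerset, (∏ i ∈ T, q i) * (∏ i ∈ Finset.univ \ T, (1 - q i)) * f T := by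
    rw [Finset.powerset_univ]
    exact Finset.sum_congr rfl fun T _ => by rw [hrw T]
  have hRHS : (∑ T : Finset (Fin n),
        (∏ i ∈ T, (1 - Real.exp (-(q i)))) * (∏ i ∈ Tᶜ, Real.exp (-(q i))) * f T)
      = ∑ T ∈ Finset.univ.powerset, (∏ i ∈ T, p i) * (∏ i ∈ Finset.univ \ T, (1 - p i)) * f T := by
    rw [Finset.powerset_univ]
    refine Finset.sum_congr rfl fun T _ => ?_
    rw [hrw T]
    congr 1
    congr 1
    exact Finset.prod_congr rfl fun i _ => by simp [hp]
  rw [hLHS, hRHS]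
  have hfe : 0 ≤ (1 - c) * f ∅ := mul_nonneg (by linarith) (hnn ∅)
  linarith
end
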